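/- Let S be a semigroup with identity generated by A = {e, g}, where e is an idempotent with e ≠ 1, satisfying e g^{k₁} e g^{k₂} e = e g^{k₂} e g^{k₁} e for all nonnegative k₁, k₂, and for all nonnegative integers i₁, j₁, i₂, j₂ the sets gⁱ¹(eSe)gʲ¹ and gⁱ²(eSe)gʲ² intersect only if (i₁, j₁) = (i₂, j₂). Then the number of elements of S₀ = eSe of length exactly m with respect to A is at most p(m), the number of partitions of m, and consequently γ_A(n) ≤ 2(n+1)³ p(n) for all n ≥ 1. -/

import Mathlib

open Filter

/-- `A` generates the semigroup-with-identity `S`: every element of `S` is a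
(finite, possibly empty) product of elements of `A`. -/
def Generates {S : Type*} [Monoid S] (A : Set S) : Prop :=
  ∀ x : S, ∃ l : List S, (∀ a ∈ l, a ∈ A) ∧ l.prod = x

/-- The length `ℓ_A(x)`: the least `m` such that `x` is a product of `m` elements
of `A` (with `ℓ_A(1) = 0` via the empty product). -/
noncomputable def wordLen {S : Type*} [Monoid S] (A : Set S) (x : S) : ℕ :=
  sInf {m : ℕ | ∃ l : List S, (∀ a ∈ l, a ∈ A) ∧ l.length = m ∧ l.prod = x}

/-- The growth function `γ_A(n)`: the number of elements expressible as a product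
of at most `n` elements of `A` (equivalently, the number of `x` with `ℓ_A(x) ≤ n`). -/
noncomputable def growth {S : Type*} [Monoid S] (A : Set S) (n : ℕ) : ℕ :=
  Set.ncard {x : S | ∃ l : List S, (∀ a ∈ l, a ∈ A) ∧ l.length ≤ n ∧ l.prod = x}

/-- `p(n)`, the number of partitions of `n` into positive integer parts. -/
noncomputable def partitionFn (n : ℕ) : ℕ := Nat.card (Nat.Partition n)


section Aux

variable {S : Type*} [Monoid S]

/-- normal form: `e · g^{k₁} e · g^{k₂} e ⋯ g^{k_r} e`. -/
def Fw (e g : S) (ks : List ℕ) : S := e * (ks.map (fun k => g ^ k * e)).prod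

lemma Fw_nil (e g : S) : Fw e g [] = e := by simp [Fw]

lemma Fw_cons (e g : S) (k : ℕ) (ks : List ℕ) :
    Fw e g (k :: ks) = e * g ^ k * Fw e g ks := by
  simp [Fw, mul_assoc]

lemma Fw_eye (e g : S) (he : e * e = e) (ks : List ℕ) :
    ∃ y : S, Fw e g ks = e * y * e := by
  induction ks with
  | nil => exact ⟨1, by simp [Fw_nil, he]⟩
  | cons k ks ih =>
    obtain ⟨y, hy⟩ := ih
    exact ⟨g ^ k * e * y, by rw [Fw_cons, hy]; simp [mul_assoc]⟩

lemma Fw_perm (e g : S)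
    (hcomm : ∀ k₁ k₂ : ℕ,
      e * g ^ k₁ * e * g ^ k₂ * e = e * g ^ k₂ * e * g ^ k₁ * e)
    {l l' : List ℕ} (h : l.Perm l') : Fw e g l = Fw e g l' := by
  induction h with
  | nil => rfl
  | cons a _ ih => rw [Fw_cons, Fw_cons, ih]
  | swap a b t =>
    have h := congrArg (fun z => z * (t.map (fun k => g ^ k * e)).prod) (hcomm b a)
    simpa [Fw, mul_assoc] using h
  | trans _ _ ih1 ih2 => rw [ih1, ih2]

lemma Fw_zero_cons (e g : S) (he : e * e = e) (ks : List ℕ) :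
    Fw e g (0 :: ks) = Fw e g ks := by
  simp [Fw, ← mul_assoc, he]

/-- remove the zero entries from a normal form. -/
lemma Fw_reduce (e g : S) (he : e * e = e) (ks : List ℕ) :
    ∃ ks' : List ℕ, (∀ k ∈ ks', 1 ≤ k) ∧ Fw e g ks' = Fw e g ks ∧
      ks'.sum = ks.sum ∧ ks'.length ≤ ks.length ∧
      (ks'.length = ks.length → ∀ k ∈ ks, 1 ≤ k) := by
  induction ks with
  | nil => exact ⟨[], by simp⟩
  | cons k ks ih =>
    obtain ⟨ks', h1, h2, h3, h4, h5⟩ := ih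
    rcases Nat.eq_zero_or_pos k with hk | hk
    · subst hk
      refine ⟨ks', h1, by rw [h2, Fw_zero_cons e g he], by simp [h3], by simp; omega, ?_⟩
      intro hlen
      simp at hlen; omega
    · refine ⟨k :: ks', ?_, ?_, by simp [h3], by simpa using h4, ?_⟩
      · intro a ha
        rcases List.mem_cons.1 ha with h | h
        · omega
        · exact h1 a h
      · rw [Fw_cons, Fw_cons, h2]
      · intro hlen a ha
        simp at hlen
        rcases List.mem_cons.1 ha with h | h
        · omega
        · exact h5 hlen a h

/-- a word of the expected length realizing a normal form. -/
lemma Fw_word (e g : S) (ks : List ℕ) :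
    ∃ l : List S, (∀ a ∈ l, a ∈ ({e, g} : Set S)) ∧
      l.length = ks.sum + ks.length + 1 ∧ l.prod = Fw e g ks := by
  induction ks with
  | nil => exact ⟨[e], by simp [Fw_nil]⟩
  | cons k ks ih =>
    obtain ⟨l, hl, hlen, hprod⟩ := ih
    refine ⟨e :: (List.replicate k g ++ l), ?_, ?_, ?_⟩
    · intro a ha
      rcases List.mem_cons.1 ha with h | h
      · simp [h]
      · rcases List.mem_append.1 h with h | h
        · simp [List.eq_of_mem_replicate h]
        · exact hl a h
    · simp [hlen]; omega
    · rw [List.prod_cons, List.prod_append, List.prod_replicate, hprod,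
        Fw_cons, mul_assoc]

/-- parsing a word over `{e, g}`. -/
lemma parse_word (e g : S) (l : List S) (hl : ∀ a ∈ l, a ∈ ({e, g} : Set S)) :
    l.prod = g ^ l.length ∨
      ∃ i j : ℕ, ∃ ks : List ℕ, l.prod = g ^ i * Fw e g ks * g ^ j ∧
        i + j + ks.sum + ks.length + 1 = l.length := by
  induction l with
  | nil => left; simp
  | cons a l ih =>
    have hmem : ∀ b ∈ l, b ∈ ({e, g} : Set S) := fun b hb => hl b (List.mem_cons_of_mem a hb)
    have ha : a = e ∨ a = g := by simpa using hl a (List.mem_cons_self (a := a) (l := l))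
    rcases ih hmem with hc | ⟨i, j, ks, hp, hc⟩
    · rcases ha with rfl | rfl
      · right
        refine ⟨0, l.length, [], ?_, by simp⟩
        rw [List.prod_cons, hc, Fw_nil, pow_zero, one_mul]
      · left
        rw [List.prod_cons, hc, List.length_cons, pow_succ']
    · rcases ha with rfl | rfl
      · right
        refine ⟨0, j, i :: ks, ?_, by simp; omega⟩
        rw [List.prod_cons, hp, pow_zero, one_mul, Fw_cons, ← mul_assoc, ← mul_assoc]
      · right
        refine ⟨i + 1, j, ks, ?_, by simp; omega⟩
        rw [List.prod_cons, hp, pow_succ', mul_assoc, mul_assoc, mul_assoc]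

lemma eye_ne_one (e : S) (he : e * e = e) (hne : e ≠ 1) (y : S) :
    e * y * e ≠ 1 := by
  intro h
  have h2 : e * (e * y * e) = e * y * e := by simp only [← mul_assoc, he]
  rw [h, mul_one] at h2
  exact hne h2

instance partNonempty (m : ℕ) : Nonempty (Nat.Partition m) :=
  ⟨⟨Multiset.replicate m 1, fun hi => by
      rw [Multiset.eq_of_mem_replicate hi]; norm_num,
    by simp [Multiset.sum_replicate]⟩⟩

end Aux

section Aux2

lemma sum_map_succ (ks : List ℕ) : (ks.map (· + 1)).sum = ks.sum + ks.length := by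
  induction ks with
  | nil => simp
  | cons k ks ih => simp [ih]; omega

lemma succ_inj' : Function.Injective (fun k : ℕ => k + 1) := fun a b h => by simpa using h

/-- the partition of `m` attached to a normal form of weight `m`. -/
def listPart (m : ℕ) (ks : List ℕ) (h1 : ∀ k ∈ ks, 1 ≤ k)
    (h2 : ks.sum + ks.length + 1 = m) : Nat.Partition m where
  parts := 1 ::ₘ (↑(ks.map (· + 1)) : Multiset ℕ)
  parts_pos := by
    intro i hi
    rcases Multiset.mem_cons.1 hi with h | h
    · omega
    · obtain ⟨k, hk, rfl⟩ := List.mem_map.1 (Multiset.mem_coe.1 h)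
      omega
  parts_sum := by
    rw [Multiset.sum_cons, Multiset.sum_coe, sum_map_succ]
    omega

lemma listPart_inj {m : ℕ} {ks ks' : List ℕ} {h1 h2 h1' h2'}
    (h : listPart m ks h1 h2 = listPart m ks' h1' h2') : ks.Perm ks' := by
  have h' := congrArg Nat.Partition.parts h
  simp only [listPart] at h'
  rw [Multiset.cons_inj_right, ← Multiset.map_coe, ← Multiset.map_coe] at h'
  exact Multiset.coe_eq_coe.1 (Multiset.map_injective succ_inj' h')

/-- the partition of `n` attached to a normal form of weight at most `n`,
padded with parts equal to `1`. -/
def padPart (n : ℕ) (ks : List ℕ) (h1 : ∀ k ∈ ks, 1 ≤ k)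
    (h2 : ks.sum + ks.length ≤ n) : Nat.Partition n where
  parts := (↑(ks.map (· + 1)) : Multiset ℕ) + Multiset.replicate (n - (ks.sum + ks.length)) 1
  parts_pos := by
    intro i hi
    rcases Multiset.mem_add.1 hi with h | h
    · obtain ⟨k, hk, rfl⟩ := List.mem_map.1 (Multiset.mem_coe.1 h)
      omega
    · rw [Multiset.eq_of_mem_replicate h]; omega
  parts_sum := by
    rw [Multiset.sum_add, Multiset.sum_coe, sum_map_succ, Multiset.sum_replicate,
      smul_eq_mul, mul_one]
    omega

lemma padPart_inj {n : ℕ} {ks ks' : List ℕ} {h1 h2 h1' h2'}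
    (h : padPart n ks h1 h2 = padPart n ks' h1' h2') : ks.Perm ks' := by
  have h' := congrArg (fun p : Nat.Partition n => p.parts.filter (fun x => 2 ≤ x)) h
  have hfil : ∀ (l : List ℕ), (∀ k ∈ l, 1 ≤ k) → ∀ r : ℕ,
      Multiset.filter (fun x => 2 ≤ x)
        ((↑(l.map (· + 1)) : Multiset ℕ) + Multiset.replicate r 1) =
        (↑(l.map (· + 1)) : Multiset ℕ) := by
    intro l hl r
    rw [Multiset.filter_add, Multiset.filter_eq_self.2, Multiset.filter_eq_nil.2, add_zero]
    · intro a ha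
      rw [Multiset.eq_of_mem_replicate ha]; omega
    · intro a ha
      obtain ⟨k, hk, rfl⟩ := List.mem_map.1 (Multiset.mem_coe.1 ha)
      have := hl k hk; omega
  simp only [padPart, hfil ks h1, hfil ks' h1'] at h'
  rw [← Multiset.map_coe, ← Multiset.map_coe] at h'
  exact Multiset.coe_eq_coe.1 (Multiset.map_injective succ_inj' h')

end Aux2

section Canon
variable {S : Type*} [Monoid S]

lemma canon (e g : S)
    (hgen : Generates ({e, g} : Set S))
    (he : e * e = e) (hne : e ≠ 1)
    (hcond : ∀ i₁ j₁ i₂ j₂ : ℕ,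
      ({x : S | ∃ y : S, x = g ^ i₁ * (e * y * e) * g ^ j₁} ∩
        {x : S | ∃ y : S, x = g ^ i₂ * (e * y * e) * g ^ j₂}).Nonempty →
        (i₁, j₁) = (i₂, j₂))
    (x y : S) (hx : x = e * y * e) :
    ∃ ks : List ℕ, (∀ k ∈ ks, 1 ≤ k) ∧ x = Fw e g ks ∧
      ks.sum + ks.length + 1 = wordLen ({e, g} : Set S) x := by
  have hset : {m : ℕ | ∃ l : List S, (∀ a ∈ l, a ∈ ({e, g} : Set S)) ∧
      l.length = m ∧ l.prod = x}.Nonempty := by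
    obtain ⟨l, hl, hp⟩ := hgen x
    exact ⟨l.length, l, hl, rfl, hp⟩
  have hm : ∃ l : List S, (∀ a ∈ l, a ∈ ({e, g} : Set S)) ∧
      l.length = wordLen ({e, g} : Set S) x ∧ l.prod = x := Nat.sInf_mem hset
  obtain ⟨l, hl, hlen, hprod⟩ := hm
  rcases parse_word e g l hl with hc | ⟨i, j, ks, hp, hc⟩
  · exfalso
    have hxg : x = g ^ l.length := by rw [← hprod, hc]
    have hz : ({z : S | ∃ y : S, z = g ^ l.length * (e * y * e) * g ^ 0} ∩
        {z : S | ∃ y : S, z = g ^ 0 * (e * y * e) * g ^ 0}).Nonempty := by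
      refine ⟨x * x, ⟨y, ?_⟩, ⟨y * e * e * y, ?_⟩⟩
      · rw [pow_zero, mul_one]
        nth_rewrite 1 [hxg]
        rw [hx]
      · simp only [pow_zero, one_mul, mul_one, hx, mul_assoc]
    have h0 : l.length = 0 := by
      have := hcond l.length 0 0 0 hz
      simpa using this
    rw [h0, pow_zero] at hxg
    exact eye_ne_one e he hne y (by rw [← hx, hxg])
  · have hxg : x = g ^ i * Fw e g ks * g ^ j := by rw [← hprod, hp]
    obtain ⟨y', hy'⟩ := Fw_eye e g he ks
    have hz : ({z : S | ∃ y : S, z = g ^ i * (e * y * e) * g ^ j} ∩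
        {z : S | ∃ y : S, z = g ^ 0 * (e * y * e) * g ^ 0}).Nonempty :=
      ⟨x, ⟨y', by rw [hxg, hy']⟩, ⟨y, by simp [hx]⟩⟩
    have hij := hcond i j 0 0 hz
    have hi : i = 0 := by simpa using congrArg Prod.fst hij
    have hj : j = 0 := by simpa using congrArg Prod.snd hij
    subst hi; subst hj
    rw [pow_zero, one_mul, mul_one] at hxg
    obtain ⟨ks', h1, h2, h3, h4, h5⟩ := Fw_reduce e g he ks
    obtain ⟨l', hl', hlen', hprod'⟩ := Fw_word e g ks'
    have hle : wordLen ({e, g} : Set S) x ≤ ks'.sum + ks'.length + 1 :=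
      Nat.sInf_le ⟨l', hl', hlen', by rw [hprod', h2, ← hxg]⟩
    have heq : ks'.length = ks.length := by omega
    exact ⟨ks, h5 heq, hxg, by omega⟩

end Canon

/-- let `S` be a semigroup with identity generated by `A = {e, g}`
with `e` idempotent, `e ≠ 1`, satisfying `e g^{k₁} e g^{k₂} e = e g^{k₂} e g^{k₁} e`
for all `k₁, k₂ ≥ 0`, and such that `gⁱ¹(eSe)gʲ¹ ∩ gⁱ²(eSe)gʲ² ≠ ∅` only if
`(i₁,j₁) = (i₂,j₂)`.  Then the number of elements of `S₀ = eSe` of length exactly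
`m` is at most `p(m)`, and `γ_A(n) ≤ 2(n+1)³ p(n)` for all `n ≥ 1`. -/
theorem stmt5 {S : Type*} [Monoid S] (e g : S)
    (hgen : Generates ({e, g} : Set S)) (h1 : (1 : S) ∉ ({e, g} : Set S))
    (he : e * e = e) (hne : e ≠ 1)
    (hcomm : ∀ k₁ k₂ : ℕ,
      e * g ^ k₁ * e * g ^ k₂ * e = e * g ^ k₂ * e * g ^ k₁ * e)
    (hcond : ∀ i₁ j₁ i₂ j₂ : ℕ,
      ({x : S | ∃ y : S, x = g ^ i₁ * (e * y * e) * g ^ j₁} ∩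
        {x : S | ∃ y : S, x = g ^ i₂ * (e * y * e) * g ^ j₂}).Nonempty →
        (i₁, j₁) = (i₂, j₂)) :
    (∀ m : ℕ,
      Set.ncard {x : S | (∃ y : S, x = e * y * e) ∧
          wordLen ({e, g} : Set S) x = m} ≤ partitionFn m) ∧
    ∀ n : ℕ, 1 ≤ n →
      growth ({e, g} : Set S) n ≤ 2 * (n + 1) ^ 3 * partitionFn n := by
  classical
  constructor
  · -- part (a)
    intro m
    set P : S → Prop := fun x => ∃ ks : List ℕ, (∀ k ∈ ks, 1 ≤ k) ∧ x = Fw e g ks ∧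
      ks.sum + ks.length + 1 = m with hP
    have key : ∀ x ∈ {x : S | (∃ y : S, x = e * y * e) ∧
        wordLen ({e, g} : Set S) x = m}, P x := by
      rintro x ⟨⟨y, hy⟩, hw⟩
      obtain ⟨ks, k1, k2, k3⟩ := canon e g hgen he hne hcond x y hy
      exact ⟨ks, k1, k2, by rw [k3, hw]⟩
    set f : S → Nat.Partition m := fun x =>
      if h : P x then listPart m h.choose h.choose_spec.1 h.choose_spec.2.2
      else Classical.arbitrary _ with hf
    have hinj : Set.InjOn f {x : S | (∃ y : S, x = e * y * e) ∧
        wordLen ({e, g} : Set S) x = m} := by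
      intro a ha b hb hab
      have pa := key a ha
      have pb := key b hb
      rw [hf] at hab
      simp only [dif_pos pa, dif_pos pb] at hab
      have hperm := listPart_inj hab
      rw [pa.choose_spec.2.1, pb.choose_spec.2.1]
      exact Fw_perm e g hcomm hperm
    refine le_trans (Set.ncard_le_ncard_of_injOn f (fun a _ => Set.mem_univ _)
      hinj Set.finite_univ) ?_
    rw [Set.ncard_univ]
    exact le_rfl
  · -- part (b)
    intro n hn
    set A := ({e, g} : Set S) with hA
    set Gn := {x : S | ∃ l : List S, (∀ a ∈ l, a ∈ A) ∧ l.length ≤ n ∧ l.prod = x} with hGn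
    set Q1 : S → Prop := fun x => ∃ k : ℕ, k ≤ n ∧ x = g ^ k with hQ1
    set Q2 : S → Prop := fun x => ∃ t : ℕ × ℕ × List ℕ, (∀ k ∈ t.2.2, 1 ≤ k) ∧
      x = g ^ t.1 * Fw e g t.2.2 * g ^ t.2.1 ∧
      t.1 + t.2.1 + (t.2.2.sum + t.2.2.length) + 1 ≤ n with hQ2
    have key : ∀ x ∈ Gn, Q1 x ∨ Q2 x := by
      rintro x ⟨l, hl, hlen, hprod⟩
      rcases parse_word e g l hl with hc | ⟨i, j, ks, hp, hc⟩
      · exact Or.inl ⟨l.length, hlen, by rw [← hprod, hc]⟩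
      · obtain ⟨ks', k1, k2, k3, k4, _⟩ := Fw_reduce e g he ks
        refine Or.inr ⟨(i, j, ks'), k1, ?_, by simp; omega⟩
        rw [← hprod, hp, k2]
    have hq : 1 ≤ partitionFn n := Nat.card_pos
    set f : S → (Fin (n + 1)) ⊕ (Fin (n + 1) × Fin (n + 1) × Nat.Partition n) := fun x =>
      if h : Q1 x then Sum.inl ⟨h.choose, by have := h.choose_spec.1; omega⟩
      else if h : Q2 x then
        Sum.inr (⟨h.choose.1, by have := h.choose_spec.2.2; omega⟩,
          ⟨h.choose.2.1, by have := h.choose_spec.2.2; omega⟩,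
          padPart n h.choose.2.2 h.choose_spec.1 (by have := h.choose_spec.2.2; omega))
      else Sum.inl ⟨0, by omega⟩ with hf
    have hinj : Set.InjOn f Gn := by
      intro a ha b hb hab
      rw [hf] at hab
      by_cases q1a : Q1 a <;> by_cases q1b : Q1 b
      · simp only [dif_pos q1a, dif_pos q1b, Sum.inl.injEq, Fin.mk.injEq] at hab
        rw [q1a.choose_spec.2, q1b.choose_spec.2, hab]
      · have q2b := (key b hb).resolve_left q1b
        simp only [dif_pos q1a, dif_neg q1b, dif_pos q2b] at hab
        exact absurd hab (Sum.inl_ne_inr)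
      · have q2a := (key a ha).resolve_left q1a
        simp only [dif_neg q1a, dif_pos q1b, dif_pos q2a] at hab
        exact absurd hab (Sum.inr_ne_inl)
      · have q2a := (key a ha).resolve_left q1a
        have q2b := (key b hb).resolve_left q1b
        simp only [dif_neg q1a, dif_neg q1b, dif_pos q2a, dif_pos q2b,
          Sum.inr.injEq, Prod.mk.injEq, Fin.mk.injEq] at hab
        obtain ⟨hab1, hab2, hab3⟩ := hab
        have hperm := padPart_inj hab3
        rw [q2a.choose_spec.2.1, q2b.choose_spec.2.1, hab1, hab2,
          Fw_perm e g hcomm hperm]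
    have hgrowth : growth A n = Gn.ncard := rfl
    rw [hgrowth]
    have hG : Gn.ncard ≤
        Nat.card ((Fin (n + 1)) ⊕ (Fin (n + 1) × Fin (n + 1) × Nat.Partition n)) :=
      le_trans (Set.ncard_le_ncard_of_injOn f (fun a _ => Set.mem_univ _)
        hinj Set.finite_univ) (le_of_eq (Set.ncard_univ _))
    have hcard : Nat.card ((Fin (n + 1)) ⊕ (Fin (n + 1) × Fin (n + 1) × Nat.Partition n))
        = (n + 1) + (n + 1) * ((n + 1) * partitionFn n) := by
      rw [Nat.card_sum, Nat.card_prod, Nat.card_prod]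
      simp [Nat.card_eq_fintype_card, Fintype.card_fin, partitionFn]
    refine le_trans hG ?_
    rw [hcard]
    have e1 : (n + 1) ≤ (n + 1) ^ 3 * partitionFn n := by
      calc (n + 1) = (n + 1) ^ 1 * 1 := by ring
      _ ≤ (n + 1) ^ 3 * partitionFn n :=
        Nat.mul_le_mul (Nat.pow_le_pow_right (by omega) (by omega)) hq
    have e2 : (n + 1) * ((n + 1) * partitionFn n) ≤ (n + 1) ^ 3 * partitionFn n := by
      calc (n + 1) * ((n + 1) * partitionFn n) = (n + 1) ^ 2 * partitionFn n := by ring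
      _ ≤ (n + 1) ^ 3 * partitionFn n :=
        Nat.mul_le_mul (Nat.pow_le_pow_right (by omega) (by omega)) le_rfl
    calc (n + 1) + (n + 1) * ((n + 1) * partitionFn n)
        ≤ (n + 1) ^ 3 * partitionFn n + (n + 1) ^ 3 * partitionFn n := Nat.add_le_add e1 e2
      _ = 2 * (n + 1) ^ 3 * partitionFn n := by ring
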